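/- Under the bijection between P–1_n multichains of length k and shifted tableaux T of shape λ(P) with max(T) ≤ k (for P of length n starting with d), a multichain has only small intervals if and only if the corresponding shifted tableau is strictly increasing along rows and columns. -/

import Mathlib

open Finset

/-- The `x`-th step (1-indexed) of a binary path `P` of length `n`;
`true` denotes an upstep `u`, `false` a downstep `d`. -/
def stp (n : ℕ) (P : Fin n → Bool) (x : ℕ) : Bool :=
  if h : 1 ≤ x ∧ x ≤ n then P ⟨x - 1, by omega⟩ else true

/-- The height of the `x`-th lattice point of the path (the partial sum of `±1`'s). -/
def ht (n : ℕ) (P : Fin n → Bool) (x : ℕ) : ℤ :=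
  ∑ j ∈ Finset.Icc 1 x, (if stp n P j then (1 : ℤ) else -1)

/-- The order on binary paths: `P ≤ Q` iff every height of `P` is at most that of `Q`. -/
def pLE (n : ℕ) (P Q : Fin n → Bool) : Prop := ∀ x ≤ n, ht n P x ≤ ht n Q x

def pLT (n : ℕ) (P Q : Fin n → Bool) : Prop := pLE n P Q ∧ ¬ pLE n Q P

/-- `Q` covers `P` in the lattice of binary paths. -/
def covers (n : ℕ) (P Q : Fin n → Bool) : Prop :=
  pLT n P Q ∧ ∀ R, pLT n P R → ¬ pLT n R Q

/-- The `x`-th point of `P` is a valley: last point of a maximal run of downsteps. -/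
def valley (n : ℕ) (P : Fin n → Bool) (x : ℕ) : Prop :=
  1 ≤ x ∧ x ≤ n ∧ stp n P x = false ∧ (x = n ∨ stp n P (x + 1) = true)

/-- The maximum path `1_n = u^n`. -/
def pTop (n : ℕ) : Fin n → Bool := fun _ => true

/-- The minimum path `0_n = d^n`. -/
def pBot (n : ℕ) : Fin n → Bool := fun _ => false

/-- The set of positions of downsteps of `P`. -/
def dsteps (n : ℕ) (P : Fin n → Bool) : Finset (Fin n) :=
  Finset.univ.filter fun j => P j = false

/-- `m(P) = |P|_d`, the number of downsteps of `P`. -/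
def nd (n : ℕ) (P : Fin n → Bool) : ℕ := (dsteps n P).card

/-- The 0-indexed position of the `(i+1)`-st downstep of `P`. -/
def dpos (n : ℕ) (P : Fin n → Bool) (i : Fin (nd n P)) : ℕ :=
  (((dsteps n P).orderIsoOfFin rfl i : {x // x ∈ dsteps n P}) : Fin n)

/-- The part `λ_{i+1} = n − (i+1) − k_{i+1} + 1` of the strict partition `λ(P)`;
since `k_{i+1} = dpos i − i`, this equals `n − dpos i`. -/
def lam (n : ℕ) (P : Fin n → Bool) (i : Fin (nd n P)) : ℕ := n - dpos n P i

/-- The shifted diagram `F(P)` of shape `λ(P)`, as the set of (1-indexed) cells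
`(i, j)` with `i ∈ [m]`, `i ≤ j ≤ λ_i + i − 1`. -/
def F (n : ℕ) (P : Fin n → Bool) : Set (ℕ × ℕ) :=
  {c | ∃ i : Fin (nd n P),
    c.1 = (i : ℕ) + 1 ∧ (i : ℕ) + 1 ≤ c.2 ∧ c.2 ≤ lam n P i + (i : ℕ)}

/-- The `x`-coordinate `n + i − j` of the lattice point of cell `c = (i,j)`. -/
def cellX (n : ℕ) (c : ℕ × ℕ) : ℕ := n + c.1 - c.2

/-- The `y`-coordinate `n − i − j` of the lattice point of cell `c = (i,j)`. -/
def cellY (n : ℕ) (c : ℕ × ℕ) : ℤ := (n : ℤ) - c.1 - c.2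

/-- A shifted tableau of shape `λ(P)`: positive entries, weakly increasing along
rows and columns. -/
def isTab (n : ℕ) (P : Fin n → Bool) (T : {c : ℕ × ℕ // c ∈ F n P} → ℕ) : Prop :=
  (∀ c, 0 < T c) ∧
  (∀ c c' : {c : ℕ × ℕ // c ∈ F n P},
    c.1.1 = c'.1.1 → c.1.2 + 1 = c'.1.2 → T c ≤ T c') ∧
  (∀ c c' : {c : ℕ × ℕ // c ∈ F n P},
    c.1.1 + 1 = c'.1.1 → c.1.2 = c'.1.2 → T c ≤ T c')

/-- A shifted tableau is strictly increasing along rows and columns. -/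
def isStrictTab (n : ℕ) (P : Fin n → Bool)
    (T : {c : ℕ × ℕ // c ∈ F n P} → ℕ) : Prop :=
  (∀ c c' : {c : ℕ × ℕ // c ∈ F n P},
    c.1.1 = c'.1.1 → c.1.2 + 1 = c'.1.2 → T c < T c') ∧
  (∀ c c' : {c : ℕ × ℕ // c ∈ F n P},
    c.1.1 + 1 = c'.1.1 → c.1.2 = c'.1.2 → T c < T c')

/-- A multichain `P = P_0 ≤ P_1 ≤ ⋯ ≤ P_k = u^n`. -/
def isMultichain (n k : ℕ) (P : Fin n → Bool)
    (C : Fin (k + 1) → Fin n → Bool) : Prop :=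
  (∀ i : Fin k, pLE n (C i.castSucc) (C i.succ)) ∧ C 0 = P ∧ C (Fin.last k) = pTop n

/-- The defining relation of the bijection: the entry at cell `(i,j)` is `k − ξ`
for the unique `ξ` with `h_{n+i−j}(P_ξ) ≤ n − i − j < h_{n+i−j}(P_{ξ+1})`. -/
def corr (n k : ℕ) (P : Fin n → Bool) (C : Fin (k + 1) → Fin n → Bool)
    (T : {c : ℕ × ℕ // c ∈ F n P} → ℕ) : Prop :=
  ∀ (c : {c : ℕ × ℕ // c ∈ F n P}) (ξ : ℕ) (hξ : ξ < k),
    (T c = k - ξ ↔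
      (ht n (C ⟨ξ, by omega⟩) (cellX n c.1) ≤ cellY n c.1 ∧
       cellY n c.1 < ht n (C ⟨ξ + 1, by omega⟩) (cellX n c.1)))

/-- The interval `[P, Q]` is small: `Q = P` or `Q` is the join of a nonempty set of
elements covering `P` (joins being pointwise maxima of heights). -/
def small (n : ℕ) (P Q : Fin n → Bool) : Prop :=
  Q = P ∨ ∃ (S : Finset (Fin n → Bool)) (hS : S.Nonempty),
    (∀ R ∈ S, covers n P R) ∧ ∀ x ≤ n, ht n Q x = S.sup' hS fun R => ht n R x


/-! ### Auxiliary lemmas -/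

theorem ht_zero' (n : ℕ) (P : Fin n → Bool) : ht n P 0 = 0 := by simp [ht]

theorem ht_succ' (n : ℕ) (P : Fin n → Bool) (x : ℕ) :
    ht n P (x + 1) = ht n P x + (if stp n P (x + 1) then 1 else -1) := by
  unfold ht
  rw [← Finset.sum_Icc_succ_top (by omega : 1 ≤ x + 1)]

theorem ht_emod (n : ℕ) (P : Fin n → Bool) (x : ℕ) :
    ht n P x % 2 = (x : ℤ) % 2 := by
  induction x with
  | zero => simp [ht_zero']
  | succ m ih => rw [ht_succ']; split <;> push_cast <;> omega

theorem ht_le (n : ℕ) (P : Fin n → Bool) (x : ℕ) : ht n P x ≤ x := by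
  induction x with
  | zero => simp [ht_zero']
  | succ m ih => rw [ht_succ']; split <;> push_cast <;> omega

theorem ht_ge (n : ℕ) (P : Fin n → Bool) (x : ℕ) : -(x:ℤ) ≤ ht n P x := by
  induction x with
  | zero => simp [ht_zero']
  | succ m ih => rw [ht_succ']; split <;> push_cast <;> omega

theorem stp_eq (n : ℕ) (P : Fin n → Bool) (x : ℕ) (h1 : 1 ≤ x) (h2 : x ≤ n) :
    stp n P x = P ⟨x - 1, by omega⟩ := by
  unfold stp; rw [dif_pos ⟨h1, h2⟩]

theorem ht_ext (n : ℕ) (P Q : Fin n → Bool) (h : ∀ x ≤ n, ht n P x = ht n Q x) :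
    P = Q := by
  funext j
  have hj : (j : ℕ) + 1 ≤ n := j.2
  have h1 := ht_succ' n P j
  have h2 := ht_succ' n Q j
  have e1 : ht n P j = ht n Q j := h j (by omega)
  have e2 : ht n P (j+1) = ht n Q (j+1) := h (j+1) (by omega)
  have s1 : stp n P ((j:ℕ) + 1) = P j := by
    rw [stp_eq n P _ (by omega) hj]; congr 1
  have s2 : stp n Q ((j:ℕ) + 1) = Q j := by
    rw [stp_eq n Q _ (by omega) hj]; congr 1
  rw [s1] at h1; rw [s2] at h2
  cases hb : P j <;> cases hb2 : Q j <;> first | rfl | (simp [hb, hb2] at h1 h2; omega)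

theorem pLE_refl (n : ℕ) (P : Fin n → Bool) : pLE n P P := fun _ _ => le_refl _

/-- The valley flip. -/
def vflip (n v : ℕ) (P : Fin n → Bool) : Fin n → Bool := fun j =>
  if (j : ℕ) + 1 = v then true else if (j : ℕ) = v then false else P j

theorem stp_vflip (n v : ℕ) (P : Fin n → Bool) (t : ℕ) (h1 : 1 ≤ t) (h2 : t ≤ n) :
    stp n (vflip n v P) t =
      if t = v then true else if t = v + 1 then false else stp n P t := by
  rw [stp_eq n _ t h1 h2, stp_eq n P t h1 h2]
  show (if (t-1) + 1 = v then true else if t - 1 = v then false else P ⟨t-1, _⟩) = _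
  by_cases hv : t = v
  · rw [if_pos (by omega), if_pos hv]
  · rw [if_neg (by omega)]
    by_cases hv1 : t = v + 1
    · rw [if_pos (by omega), if_neg hv, if_pos hv1]
    · rw [if_neg (by omega), if_neg hv, if_neg hv1]

theorem ht_vflip (n v : ℕ) (P : Fin n → Bool) (hval : valley n P v) :
    ∀ x ≤ n, ht n (vflip n v P) x = ht n P x + (if x = v then 2 else 0) := by
  obtain ⟨hv1, hvn, hsv, hnext⟩ := hval
  intro x hx
  induction x with
  | zero => rw [if_neg (by omega), ht_zero', ht_zero', add_zero]
  | succ m ih =>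
    have hm : m ≤ n := by omega
    have ihm := ih hm
    rw [ht_succ', ht_succ', stp_vflip n v P (m+1) (by omega) hx]
    by_cases h1 : m + 1 = v
    · rw [if_pos h1, if_pos h1]
      have hst : stp n P (m+1) = false := h1 ▸ hsv
      rw [if_neg (show ¬ m = v by omega)] at ihm
      rw [hst, ihm]; norm_num; omega
    · rw [if_neg h1, if_neg h1]
      by_cases h2 : m + 1 = v + 1
      · have hm' : m = v := by omega
        have hup : stp n P (m+1) = true := by
          rcases hnext with h | h
          · omega
          · rw [hm']; exact h
        rw [if_pos hm'] at ihm
        rw [if_pos h2, hup, ihm]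
        norm_num; omega
      · rw [if_neg (show ¬ m = v by omega)] at ihm
        rw [if_neg h2, ihm]
        ring

theorem pLT_vflip (n v : ℕ) (P : Fin n → Bool) (hval : valley n P v) :
    pLT n P (vflip n v P) := by
  constructor
  · intro x hx; rw [ht_vflip n v P hval x hx]; split <;> omega
  · intro hc
    have := hc v hval.2.1
    rw [ht_vflip n v P hval v hval.2.1, if_pos rfl] at this
    omega

theorem covers_vflip (n v : ℕ) (P : Fin n → Bool) (hval : valley n P v) :
    covers n P (vflip n v P) := by
  refine ⟨pLT_vflip n v P hval, ?_⟩
  rintro R ⟨hPR, hnRP⟩ ⟨hRF, hnFR⟩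
  have hub : ∀ x ≤ n, ht n R x ≤ ht n P x + (if x = v then 2 else 0) := by
    intro x hx; rw [← ht_vflip n v P hval x hx]; exact hRF x hx
  have hv : ht n R v = ht n P v ∨ ht n R v = ht n P v + 2 := by
    have h1 := hPR v hval.2.1
    have h2 := hub v hval.2.1
    rw [if_pos rfl] at h2
    have e1 := ht_emod n R v
    have e2 := ht_emod n P v
    omega
  rcases hv with hv | hv
  · have : R = P := by
      apply ht_ext
      intro x hx
      rcases eq_or_ne x v with rfl | hne
      · exact hv
      · have h1 := hub x hx; rw [if_neg hne] at h1
        have h2 := hPR x hx; omega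
    exact hnRP (this ▸ pLE_refl n R)
  · have : R = vflip n v P := by
      apply ht_ext
      intro x hx
      rw [ht_vflip n v P hval x hx]
      rcases eq_or_ne x v with rfl | hne
      · rw [if_pos rfl]; exact hv
      · rw [if_neg hne, add_zero]
        have h1 := hub x hx; rw [if_neg hne] at h1
        have h2 := hPR x hx; omega
    exact hnFR (this ▸ pLE_refl n R)

theorem cover_eq_vflip (n : ℕ) (P R : Fin n → Bool) (hcov : covers n P R) :
    ∃ v, valley n P v ∧ ∀ x ≤ n, ht n R x = ht n P x + (if x = v then 2 else 0) := by
  classical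
  obtain ⟨⟨hle, hnle⟩, hmin⟩ := hcov
  have hex : ∃ x, x ≤ n ∧ ht n P x < ht n R x := by
    by_contra hc
    push_neg at hc
    exact hnle fun x hx => le_of_not_gt fun h => absurd (hle x hx) (by
      have := hc x hx; omega)
  let p : ℕ → Prop := fun x => x ≤ n ∧ ht n P x < ht n R x
  have hp : ∃ x, p x := hex
  let x0 := Nat.find hp
  have hx0 : p x0 := Nat.find_spec hp
  have hx0min : ∀ t, t < x0 → ¬ p t := fun t ht => Nat.find_min hp ht
  have hx0n : x0 ≤ n := hx0.1
  have hx0lt : ht n P x0 < ht n R x0 := hx0.2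
  have hx01 : 1 ≤ x0 := by
    by_contra hc
    have h0 : x0 = 0 := by omega
    rw [h0, ht_zero', ht_zero'] at hx0lt
    omega
  have heq : ∀ t, t < x0 → t ≤ n → ht n R t = ht n P t := by
    intro t htx htn
    have h1 := hx0min t htx
    have : ¬ ht n P t < ht n R t := fun hc => h1 ⟨htn, hc⟩
    exact le_antisymm (by omega) (hle t htn)
  have hx02 : ht n P x0 + 2 ≤ ht n R x0 := by
    have e1 := ht_emod n R x0
    have e2 := ht_emod n P x0
    have := hx0lt
    omega
  let q : ℕ → Prop := fun v => x0 ≤ v ∧ v ≤ n ∧ (v = n ∨ stp n P (v+1) = true)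
  have hq : ∃ v, q v := ⟨n, hx0.1, le_refl n, Or.inl rfl⟩
  let v := Nat.find hq
  have hqv : q v := Nat.find_spec hq
  have hqmin : ∀ t, t < v → ¬ q t := fun t ht => Nat.find_min hq ht
  have hrun : ∀ t, x0 ≤ t → t < v → stp n P (t+1) = false := by
    intro t h1 h2
    have h3 := hqmin t h2
    have htn : t ≤ n := le_trans (le_of_lt h2) hqv.2.1
    by_contra hc
    exact h3 ⟨h1, htn, Or.inr (by revert hc; cases stp n P (t+1) <;> simp)⟩
  have hPdown : ∀ d, x0 + d ≤ v → ht n P (x0 + d) = ht n P x0 - d := by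
    intro d
    induction d with
    | zero => simp
    | succ m ih =>
      intro hdv
      have h1 := ih (by omega)
      have h2 : stp n P (x0 + m + 1) = false := hrun (x0+m) (by omega) (by omega)
      rw [show x0 + (m+1) = (x0 + m) + 1 by ring, ht_succ', h2]
      simp only [if_neg (by simp : ¬ (false = true))]
      rw [h1]; push_cast; ring
  have hRdown : ∀ d, ht n R x0 - d ≤ ht n R (x0 + d) := by
    intro d
    induction d with
    | zero => simp
    | succ m ih =>
      rw [show x0 + (m+1) = (x0 + m) + 1 by ring, ht_succ']
      push_cast
      split <;> omega
  have hvx0 : x0 ≤ v := hqv.1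
  have hvn : v ≤ n := hqv.2.1
  have hRv : ht n P v + 2 ≤ ht n R v := by
    have h1 := hPdown (v - x0) (by omega)
    have h2 := hRdown (v - x0)
    rw [show x0 + (v - x0) = v by omega] at h1 h2
    omega
  have hstpv : stp n P v = false := by
    rcases eq_or_lt_of_le hvx0 with h | h
    · rw [← h]
      have hR1 : ht n R x0 ≤ ht n R (x0-1) + 1 := by
        have hs := ht_succ' n R (x0-1)
        rw [Nat.sub_add_cancel hx01] at hs
        split at hs <;> omega
      have hReq : ht n R (x0-1) = ht n P (x0-1) := heq (x0-1) (by omega) (by omega)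
      have hP1 := ht_succ' n P (x0-1)
      rw [Nat.sub_add_cancel hx01] at hP1
      by_contra hc
      have hct : stp n P x0 = true := by revert hc; cases stp n P x0 <;> simp
      rw [hct] at hP1
      simp at hP1
      omega
    · have := hrun (v-1) (by omega) (by omega)
      rw [Nat.sub_add_cancel (by omega : 1 ≤ v)] at this
      exact this
  have hval : valley n P v := ⟨by omega, hvn, hstpv, hqv.2.2⟩
  refine ⟨v, hval, ?_⟩
  have hFlipR : pLE n (vflip n v P) R := by
    intro x hx
    rw [ht_vflip n v P hval x hx]
    rcases eq_or_ne x v with rfl | hne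
    · rw [if_pos rfl]; exact hRv
    · rw [if_neg hne, add_zero]; exact hle x hx
  have hnot := hmin (vflip n v P) (pLT_vflip n v P hval)
  have hRFlip : pLE n R (vflip n v P) := by
    by_contra hc
    exact hnot ⟨hFlipR, hc⟩
  intro x hx
  have h1 := hRFlip x hx
  rw [ht_vflip n v P hval x hx] at h1
  have h2 := hle x hx
  rcases eq_or_ne x v with rfl | hne
  · rw [if_pos rfl] at h1 ⊢
    omega
  · rw [if_neg hne] at h1 ⊢
    omega

theorem psmall_iff (n : ℕ) (P Q : Fin n → Bool) :
    small n P Q ↔ ∀ x ≤ n, ht n Q x = ht n P x ∨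
      (ht n Q x = ht n P x + 2 ∧ valley n P x) := by
  constructor
  · rintro (rfl | ⟨S, hS, hcov, hsup⟩)
    · intro x hx; exact Or.inl rfl
    · intro x hx
      rw [hsup x hx]
      obtain ⟨R0, hR0, hEq⟩ := Finset.exists_mem_eq_sup' hS (fun R => ht n R x)
      obtain ⟨v, hval, hform⟩ := cover_eq_vflip n P R0 (hcov R0 hR0)
      rw [hEq, hform x hx]
      rcases eq_or_ne x v with rfl | hne
      · rw [if_pos rfl]; exact Or.inr ⟨rfl, hval⟩
      · rw [if_neg hne, add_zero]; exact Or.inl rfl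
  · intro hgs
    by_cases hQP : ∀ x ≤ n, ht n Q x = ht n P x
    · exact Or.inl (ht_ext n Q P hQP)
    · push_neg at hQP
      obtain ⟨xs, hxsn, hxs⟩ := hQP
      have hVmem : ∀ x, x ≤ n → ht n Q x ≠ ht n P x →
          (valley n P x ∧ ht n Q x = ht n P x + 2) := by
        intro x hx hne
        rcases hgs x hx with h | ⟨h1, h2⟩
        · exact absurd h hne
        · exact ⟨h2, h1⟩
      classical
      let V : Finset ℕ := (Finset.Icc 1 n).filter (fun x => ht n Q x ≠ ht n P x)
      have hxsV : xs ∈ V := by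
        have h1 : 1 ≤ xs := by
          by_contra hc
          have : xs = 0 := by omega
          rw [this, ht_zero', ht_zero'] at hxs
          exact hxs rfl
        exact Finset.mem_filter.mpr ⟨Finset.mem_Icc.mpr ⟨h1, hxsn⟩, hxs⟩
      have hVval : ∀ x ∈ V, valley n P x ∧ ht n Q x = ht n P x + 2 := by
        intro x hxV
        obtain ⟨hIcc, hne⟩ := Finset.mem_filter.mp hxV
        exact hVmem x (Finset.mem_Icc.mp hIcc).2 hne
      refine Or.inr ⟨V.image (fun v => vflip n v P), ⟨_, Finset.mem_image_of_mem _ hxsV⟩,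
        ?_, ?_⟩
      · intro R hR
        obtain ⟨v, hvV, rfl⟩ := Finset.mem_image.mp hR
        exact covers_vflip n v P (hVval v hvV).1
      · intro x hx
        apply le_antisymm
        · by_cases hxV : x ∈ V
          · have h := (hVval x hxV).2
            have hm : vflip n x P ∈ V.image (fun v => vflip n v P) :=
              Finset.mem_image_of_mem _ hxV
            refine le_trans (le_of_eq ?_) (Finset.le_sup' (fun R => ht n R x) hm)
            rw [ht_vflip n x P (hVval x hxV).1 x hx, if_pos rfl, h]
          · have hQx : ht n Q x = ht n P x := by
              by_contra hc
              rcases Nat.eq_zero_or_pos x with h0 | h0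
              · rw [h0, ht_zero', ht_zero'] at hc; exact hc rfl
              · exact hxV (Finset.mem_filter.mpr ⟨Finset.mem_Icc.mpr ⟨h0, hx⟩, hc⟩)
            have hm : vflip n xs P ∈ V.image (fun v => vflip n v P) :=
              Finset.mem_image_of_mem _ hxsV
            refine le_trans (le_of_eq ?_) (Finset.le_sup' (fun R => ht n R x) hm)
            rw [ht_vflip n xs P (hVval xs hxsV).1 x hx,
              if_neg (show ¬ x = xs by rintro rfl; exact hxV hxsV), add_zero, hQx]
        · apply Finset.sup'_le
          intro R hR
          obtain ⟨v, hvV, rfl⟩ := Finset.mem_image.mp hR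
          rw [ht_vflip n v P (hVval v hvV).1 x hx]
          rcases eq_or_ne x v with rfl | hne
          · rw [if_pos rfl]; exact le_of_eq (hVval x hvV).2.symm
          · rw [if_neg hne, add_zero]
            rcases hgs x hx with h | ⟨h1, _⟩ <;> omega

/-! ### Counting lemmas for the shifted diagram -/

/-- number of downsteps among the first `x` steps -/
def dcnt (n : ℕ) (P : Fin n → Bool) (x : ℕ) : ℕ :=
  ((dsteps n P).filter fun j : Fin n => (j : ℕ) < x).card

theorem dcnt_le (n : ℕ) (P : Fin n → Bool) (x : ℕ) : dcnt n P x ≤ nd n P :=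
  Finset.card_filter_le _ _

theorem ht_count (n : ℕ) (P : Fin n → Bool) : ∀ x ≤ n,
    ht n P x = (x : ℤ) - 2 * (dcnt n P x : ℤ) := by
  intro x
  induction x with
  | zero =>
    intro _
    have : dcnt n P 0 = 0 := by
      unfold dcnt
      rw [Finset.card_eq_zero]
      apply Finset.filter_false_of_mem
      intro j _; omega
    rw [ht_zero', this]; simp
  | succ m ih =>
    intro hx
    have hm := ih (by omega)
    have hfx : (⟨m, by omega⟩ : Fin n) ∈ (dsteps n P).filter (fun j : Fin n => (j:ℕ) < m) → False := by
      intro h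
      have := (Finset.mem_filter.mp h).2
      simp at this
    have hstep : stp n P (m+1) = P ⟨m, by omega⟩ := stp_eq n P (m+1) (by omega) hx
    by_cases hPm : P ⟨m, by omega⟩ = false
    · have hset : (dsteps n P).filter (fun j : Fin n => (j:ℕ) < m + 1)
          = insert ⟨m, by omega⟩ ((dsteps n P).filter (fun j : Fin n => (j:ℕ) < m)) := by
        ext j
        simp only [Finset.mem_filter, Finset.mem_insert, dsteps, Finset.mem_univ,
          true_and]
        constructor
        · rintro ⟨h1, h2⟩
          by_cases hj : (j : ℕ) = m
          · exact Or.inl (Fin.ext hj)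
          · exact Or.inr ⟨h1, by omega⟩
        · rintro (rfl | ⟨h1, h2⟩)
          · exact ⟨hPm, by simp⟩
          · exact ⟨h1, by omega⟩
      have hcard : dcnt n P (m+1) = dcnt n P m + 1 := by
        unfold dcnt
        rw [hset, Finset.card_insert_of_notMem (fun h => hfx h)]
      rw [ht_succ', hstep, hPm, hcard, hm]
      push_cast
      norm_num <;> omega
    · have hPm' : P ⟨m, by omega⟩ = true := by revert hPm; cases P ⟨m, by omega⟩ <;> simp
      have hset : (dsteps n P).filter (fun j : Fin n => (j:ℕ) < m + 1)
          = (dsteps n P).filter (fun j : Fin n => (j:ℕ) < m) := by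
        ext j
        simp only [Finset.mem_filter, dsteps, Finset.mem_univ, true_and]
        constructor
        · rintro ⟨h1, h2⟩
          refine ⟨h1, ?_⟩
          by_cases hj : (j : ℕ) = m
          · exfalso; have : j = (⟨m, by omega⟩ : Fin n) := Fin.ext hj
            rw [this, hPm'] at h1; simp at h1
          · omega
        · rintro ⟨h1, h2⟩; exact ⟨h1, by omega⟩
      have hcard : dcnt n P (m+1) = dcnt n P m := by unfold dcnt; rw [hset]
      rw [ht_succ', hstep, hPm', hcard, hm]
      push_cast
      norm_num <;> omega

theorem dpos_lt_iff (n : ℕ) (P : Fin n → Bool) (i : Fin (nd n P)) (x : ℕ) :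
    dpos n P i < x ↔ (i : ℕ) + 1 ≤ dcnt n P x := by
  classical
  set e := (dsteps n P).orderIsoOfFin rfl with he
  constructor
  · intro h
    have hsub : (Finset.Iic i).image (fun t => ((e t : {z // z ∈ dsteps n P}) : Fin n))
        ⊆ (dsteps n P).filter (fun j : Fin n => (j:ℕ) < x) := by
      intro j hj
      obtain ⟨t, htIic, rfl⟩ := Finset.mem_image.mp hj
      have hti : t ≤ i := Finset.mem_Iic.mp htIic
      refine Finset.mem_filter.mpr ⟨(e t).2, ?_⟩
      have hmono : (e t : {z // z ∈ dsteps n P}) ≤ e i := e.monotone hti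
      have : ((e t : {z // z ∈ dsteps n P}) : Fin n) ≤ ((e i : {z // z ∈ dsteps n P}) : Fin n) := hmono
      have hv : (((e t : {z // z ∈ dsteps n P}) : Fin n) : ℕ) ≤ dpos n P i := this
      omega
    have hinj : Function.Injective (fun t : Fin (nd n P) =>
        ((e t : {z // z ∈ dsteps n P}) : Fin n)) := by
      intro a b hab
      exact e.injective (Subtype.ext hab)
    have hcard := Finset.card_le_card hsub
    have hci : ((Finset.Iic i).image (fun t => ((e t : {z // z ∈ dsteps n P}) : Fin n))).card
        = (Finset.Iic i).card := Finset.card_image_of_injective _ hinj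
    rw [hci] at hcard
    have hIic : (Finset.Iic i).card = (i : ℕ) + 1 := by rw [Fin.card_Iic]
    unfold dcnt
    omega
  · intro h
    by_contra hc
    push_neg at hc
    have hsub : (dsteps n P).filter (fun j : Fin n => (j:ℕ) < x)
        ⊆ (Finset.Iio i).image (fun t => ((e t : {z // z ∈ dsteps n P}) : Fin n)) := by
      intro j hj
      obtain ⟨hjd, hjx⟩ := Finset.mem_filter.mp hj
      set t := e.symm ⟨j, hjd⟩ with ht
      have het : e t = ⟨j, hjd⟩ := e.apply_symm_apply _
      have hlt : t < i := by
        rcases lt_or_ge t i with h' | h'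
        · exact h'
        exfalso
        have hm1 := e.monotone h'
        rw [het] at hm1
        have hm2 : ((e i : {z // z ∈ dsteps n P}) : Fin n) ≤
            ((⟨j, hjd⟩ : {z // z ∈ dsteps n P}) : Fin n) := hm1
        have hv : dpos n P i ≤ (j : ℕ) := hm2
        omega
      refine Finset.mem_image.mpr ⟨t, (Finset.mem_Iio (α := Fin (nd n P))).mpr hlt, ?_⟩
      rw [het]
    have hcard := Finset.card_le_card hsub
    have h4 : dcnt n P x ≤ (i : ℕ) :=
      le_trans hcard (le_trans Finset.card_image_le (Fin.card_Iio i).le)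
    omega

theorem cell_facts (n : ℕ) (P : Fin n → Bool) (c : ℕ × ℕ) (hc : c ∈ F n P) :
    1 ≤ c.1 ∧ c.2 < n + c.1 ∧ 1 ≤ cellX n c ∧ cellX n c ≤ n ∧
    ((cellX n c : ℤ) = (n : ℤ) + c.1 - c.2) ∧
    (cellY n c = (cellX n c : ℤ) - 2 * c.1) ∧
    ht n P (cellX n c) ≤ cellY n c := by
  obtain ⟨i, h1, h2, h3⟩ := hc
  have hdp : dpos n P i < n := (((dsteps n P).orderIsoOfFin rfl i : {z // z ∈ dsteps n P}) : Fin n).2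
  have hlam : lam n P i = n - dpos n P i := rfl
  have hc2 : c.2 ≤ n - dpos n P i + (i : ℕ) := hlam ▸ h3
  have hb1 : 1 ≤ c.1 := by omega
  have hb2 : c.2 < n + c.1 := by omega
  have hx1 : 1 ≤ cellX n c := by unfold cellX; omega
  have hxn : cellX n c ≤ n := by unfold cellX; omega
  have hcast : (cellX n c : ℤ) = (n : ℤ) + c.1 - c.2 := by unfold cellX; push_cast; omega
  have hY : cellY n c = (cellX n c : ℤ) - 2 * c.1 := by unfold cellY; rw [hcast]; ring
  refine ⟨hb1, hb2, hx1, hxn, hcast, hY, ?_⟩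
  have hdx : dpos n P i < cellX n c := by unfold cellX; omega
  have hcnt := (dpos_lt_iff n P i (cellX n c)).mp hdx
  have hht := ht_count n P (cellX n c) hxn
  rw [hY, h1]
  push_cast
  omega

theorem cell_mk (n : ℕ) (P : Fin n → Bool) (x : ℕ) (y : ℤ) (i : ℕ)
    (hx1 : 1 ≤ x) (hxn : x ≤ n) (hy : y = (x : ℤ) - 2 * ((i : ℤ) + 1))
    (hht : ht n P x ≤ y) :
    ((i + 1, n + i + 1 - x) : ℕ × ℕ) ∈ F n P ∧
    cellX n (i + 1, n + i + 1 - x) = x ∧ cellY n (i + 1, n + i + 1 - x) = y := by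
  have hcnt : (i : ℕ) + 1 ≤ dcnt n P x := by
    have hh := ht_count n P x hxn
    have h2 : (x : ℤ) - 2 * (dcnt n P x : ℤ) ≤ (x : ℤ) - 2 * ((i:ℤ)+1) := by omega
    omega
  have hind : i < nd n P := by
    have := dcnt_le n P x
    omega
  have hdx : dpos n P ⟨i, hind⟩ < x := (dpos_lt_iff n P ⟨i, hind⟩ x).mpr hcnt
  have hdpn : dpos n P ⟨i, hind⟩ < n :=
    (((dsteps n P).orderIsoOfFin rfl ⟨i, hind⟩ : {z // z ∈ dsteps n P}) : Fin n).2
  have hlam : lam n P ⟨i, hind⟩ = n - dpos n P ⟨i, hind⟩ := rfl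
  refine ⟨⟨⟨i, hind⟩, rfl, by simp; omega, ?_⟩, ?_, ?_⟩
  · show n + i + 1 - x ≤ lam n P ⟨i, hind⟩ + i
    rw [hlam]; omega
  · unfold cellX; simp; omega
  · show (n : ℤ) - ((i+1 : ℕ) : ℤ) - ((n + i + 1 - x : ℕ) : ℤ) = y
    rw [hy]; omega

theorem cell_mk' (n : ℕ) (P : Fin n → Bool) (x : ℕ) (y : ℤ) (i : ℕ)
    (hx1 : 1 ≤ x) (hxn : x ≤ n) (hy : y = (x : ℤ) - 2 * ((i : ℤ) + 1))
    (hht : ht n P x ≤ y) :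
    ∃ c : {c : ℕ × ℕ // c ∈ F n P}, c.1.1 = i + 1 ∧ c.1.2 = n + i + 1 - x ∧
      cellX n c.1 = x ∧ cellY n c.1 = y := by
  obtain ⟨hmem, hcx, hcy⟩ := cell_mk n P x y i hx1 hxn hy hht
  exact ⟨⟨_, hmem⟩, rfl, rfl, hcx, hcy⟩

/-! ### Chain lemmas -/

/-- `ℕ`-indexed access to the multichain, saturating at `k`. -/
def cm (n k : ℕ) (C : Fin (k+1) → Fin n → Bool) (ξ : ℕ) : Fin n → Bool :=
  C ⟨min ξ k, by omega⟩

theorem cm_eq (n k : ℕ) (C : Fin (k+1) → Fin n → Bool) (ξ : ℕ) (h : ξ ≤ k)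
    (h2 : ξ < k + 1) : cm n k C ξ = C ⟨ξ, h2⟩ := by
  unfold cm; exact congrArg C (Fin.ext (by show min ξ k = ξ; omega))

theorem cm_mono (n k : ℕ) (C : Fin (k+1) → Fin n → Bool)
    (hch : ∀ i : Fin k, pLE n (C i.castSucc) (C i.succ)) :
    ∀ a b : ℕ, a ≤ b → pLE n (cm n k C a) (cm n k C b) := by
  have hstep : ∀ a : ℕ, pLE n (cm n k C a) (cm n k C (a+1)) := by
    intro a
    rcases lt_or_ge a k with h | h
    · have hs := hch ⟨a, h⟩
      have e1 : C (Fin.castSucc ⟨a, h⟩) = cm n k C a := by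
        rw [cm_eq n k C a (by omega) (by omega)]; exact congrArg C (Fin.ext (by simp))
      have e2 : C (Fin.succ ⟨a, h⟩) = cm n k C (a+1) := by
        rw [cm_eq n k C (a+1) h (by omega)]; exact congrArg C (Fin.ext (by simp))
      rwa [e1, e2] at hs
    · have heq : cm n k C a = cm n k C (a+1) := by
        unfold cm; exact congrArg C (Fin.ext (by show min a k = min (a+1) k; omega))
      rw [heq]; exact pLE_refl n _
  intro a b hab
  induction b with
  | zero =>
    have : a = 0 := by omega
    subst this; exact pLE_refl n _
  | succ m ih =>
    rcases eq_or_lt_of_le hab with rfl | hlt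
    · exact pLE_refl n _
    · exact fun x hx => le_trans (ih (by omega) x hx) (hstep m x hx)

set_option maxHeartbeats 4000000 in
/-- Under the multichain–tableau correspondence, a multichain has only small
intervals iff the tableau is strictly increasing along rows and columns. -/
theorem stmt17 (n k : ℕ) (P : Fin n → Bool) (hn : 0 < n)
    (hd : stp n P 1 = false) (hk : 0 < k)
    (C : Fin (k + 1) → Fin n → Bool) (hC : isMultichain n k P C)
    (T : {c : ℕ × ℕ // c ∈ F n P} → ℕ) (hT : isTab n P T ∧ ∀ c, T c ≤ k)
    (hco : corr n k P C T) :
    (∀ i : Fin k, small n (C i.castSucc) (C i.succ)) ↔ isStrictTab n P T := by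
  classical
  obtain ⟨hch, hC0, hCtop⟩ := hC
  obtain ⟨⟨hTpos, hTrow, hTcol⟩, hTk⟩ := hT
  have hco' : ∀ (c : {c : ℕ × ℕ // c ∈ F n P}) (ξ : ℕ), ξ < k →
      (T c = k - ξ ↔
        (ht n (cm n k C ξ) (cellX n c.1) ≤ cellY n c.1 ∧
         cellY n c.1 < ht n (cm n k C (ξ+1)) (cellX n c.1))) := by
    intro c ξ hξ
    rw [cm_eq n k C ξ (by omega) (by omega), cm_eq n k C (ξ+1) (by omega) (by omega)]
    exact hco c ξ hξ
  have hmono := cm_mono n k C hch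
  have hPle : ∀ ξ : ℕ, pLE n P (cm n k C ξ) := by
    intro ξ
    have h0 : cm n k C 0 = P := by
      rw [cm_eq n k C 0 (by omega) (by omega), show (⟨0, by omega⟩ : Fin (k+1)) = 0 by
        exact Fin.ext (by simp), hC0]
    rw [← h0]; exact hmono 0 ξ (by omega)
  have hsand : ∀ c : {c : ℕ × ℕ // c ∈ F n P},
      ht n (cm n k C (k - T c)) (cellX n c.1) ≤ cellY n c.1 ∧
      cellY n c.1 < ht n (cm n k C (k - T c + 1)) (cellX n c.1) := by
    intro c
    have h1 := hTpos c
    have h2 := hTk c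
    exact (hco' c (k - T c) (by omega)).mp (by omega)
  constructor
  · -- small intervals → strict tableau
    intro hsm
    have hgs : ∀ ξ : ℕ, ξ < k → ∀ x ≤ n,
        ht n (cm n k C (ξ+1)) x = ht n (cm n k C ξ) x ∨
        (ht n (cm n k C (ξ+1)) x = ht n (cm n k C ξ) x + 2 ∧
          valley n (cm n k C ξ) x) := by
      intro ξ hξ
      have hsmall := hsm ⟨ξ, hξ⟩
      have e1 : C (Fin.castSucc ⟨ξ, hξ⟩) = cm n k C ξ := by
        rw [cm_eq n k C ξ (by omega) (by omega)]; exact congrArg C (Fin.ext (by simp))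
      have e2 : C (Fin.succ ⟨ξ, hξ⟩) = cm n k C (ξ+1) := by
        rw [cm_eq n k C (ξ+1) hξ (by omega)]; exact congrArg C (Fin.ext (by simp))
      rw [e1, e2] at hsmall
      exact (psmall_iff n _ _).mp hsmall
    constructor
    · -- rows
      intro c c' he1 he2
      obtain ⟨hb1, hb2, hx1, hxn, hcast, hYe, hhtP⟩ := cell_facts n P c.1 c.2
      obtain ⟨hb1', hb2', hx1', hxn', hcast', hYe', hhtP'⟩ := cell_facts n P c'.1 c'.2
      obtain ⟨hlo, hhi⟩ := hsand c
      obtain ⟨hlo', hhi'⟩ := hsand c'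
      have hTc1 := hTpos c; have hTc2 := hTk c
      have hTc1' := hTpos c'; have hTc2' := hTk c'
      set x := cellX n c.1 with hxdef
      set y := cellY n c.1 with hydef
      have hx' : cellX n c'.1 = x - 1 := by omega
      have hy' : cellY n c'.1 = y - 1 := by omega
      rw [hx', hy'] at hlo' hhi'
      have hgx := hgs (k - T c) (by omega) x hxn
      have hpx := ht_emod n (cm n k C (k - T c)) x
      have hEq : ht n (cm n k C (k - T c)) x = y := by
        rcases hgx with h | ⟨h, _⟩ <;> omega
      have hvall : valley n (cm n k C (k - T c)) x := by
        rcases hgx with h | ⟨_, hv⟩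
        · exfalso; omega
        · exact hv
      have hst : stp n (cm n k C (k - T c)) x = false := hvall.2.2.1
      have hs := ht_succ' n (cm n k C (k - T c)) (x-1)
      rw [Nat.sub_add_cancel hx1, hst] at hs
      simp at hs
      by_contra hcon
      push_neg at hcon
      have hmle := hmono (k - T c) (k - T c') (by omega) (x-1) (by omega)
      omega
    · -- columns
      intro c c' he1 he2
      obtain ⟨hb1, hb2, hx1, hxn, hcast, hYe, hhtP⟩ := cell_facts n P c.1 c.2
      obtain ⟨hb1', hb2', hx1', hxn', hcast', hYe', hhtP'⟩ := cell_facts n P c'.1 c'.2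
      obtain ⟨hlo, hhi⟩ := hsand c
      obtain ⟨hlo', hhi'⟩ := hsand c'
      have hTc1 := hTpos c; have hTc2 := hTk c
      have hTc1' := hTpos c'; have hTc2' := hTk c'
      set x := cellX n c.1 with hxdef
      set y := cellY n c.1 with hydef
      have hx' : cellX n c'.1 = x + 1 := by omega
      have hy' : cellY n c'.1 = y - 1 := by omega
      rw [hx', hy'] at hlo' hhi'
      rw [hx'] at hxn'
      have hgx := hgs (k - T c) (by omega) x hxn
      have hpx := ht_emod n (cm n k C (k - T c)) x
      have hEq : ht n (cm n k C (k - T c)) x = y := by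
        rcases hgx with h | ⟨h, _⟩ <;> omega
      have hvall : valley n (cm n k C (k - T c)) x := by
        rcases hgx with h | ⟨_, hv⟩
        · exfalso; omega
        · exact hv
      have hup : stp n (cm n k C (k - T c)) (x+1) = true := by
        rcases hvall.2.2.2 with h | h
        · omega
        · exact h
      have hs := ht_succ' n (cm n k C (k - T c)) x
      rw [hup] at hs
      simp at hs
      by_contra hcon
      push_neg at hcon
      have hmle := hmono (k - T c) (k - T c') (by omega) (x+1) (by omega)
      omega
  · -- strict tableau → small intervals
    intro hstr i
    have e1 : C (Fin.castSucc i) = cm n k C (i : ℕ) := by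
      rw [cm_eq n k C (i : ℕ) (by omega) (by omega)]; exact congrArg C (Fin.ext (by simp))
    have e2 : C (Fin.succ i) = cm n k C ((i : ℕ)+1) := by
      rw [cm_eq n k C ((i : ℕ)+1) i.isLt (by omega)]; exact congrArg C (Fin.ext (by simp))
    rw [e1, e2, psmall_iff]
    have hξ : (i : ℕ) < k := i.isLt
    set ξ := (i : ℕ) with hxidef
    intro x hx
    have hab : ht n (cm n k C ξ) x ≤ ht n (cm n k C (ξ+1)) x :=
      hmono ξ (ξ+1) (by omega) x hx
    by_cases heq0 : ht n (cm n k C (ξ+1)) x = ht n (cm n k C ξ) x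
    · exact Or.inl heq0
    have hpA := ht_emod n (cm n k C ξ) x
    have hpB := ht_emod n (cm n k C (ξ+1)) x
    have hd2 : ht n (cm n k C ξ) x + 2 ≤ ht n (cm n k C (ξ+1)) x := by omega
    have hx1 : 1 ≤ x := by
      by_contra h0
      have hx0 : x = 0 := by omega
      rw [hx0] at hd2
      have z1 := ht_zero' n (cm n k C ξ)
      have z2 := ht_zero' n (cm n k C (ξ+1))
      omega
    obtain ⟨y, hydef⟩ : ∃ y : ℤ, y = ht n (cm n k C (ξ+1)) x - 2 := ⟨_, rfl⟩
    have hBle := ht_le n (cm n k C (ξ+1)) x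
    obtain ⟨i0, hi0⟩ : ∃ m : ℕ, y = (x:ℤ) - 2*((m:ℤ)+1) := by
      refine ⟨(((x:ℤ) - y)/2 - 1).toNat, ?_⟩
      omega
    have hhtPx : ht n P x ≤ y := le_trans (hPle ξ x hx) (by omega)
    obtain ⟨c, hc11, hc12, hcx', hcy'⟩ := cell_mk' n P x y i0 hx1 hx hi0 hhtPx
    have hTc : T c = k - ξ := by
      apply (hco' c ξ hξ).mpr
      rw [hcx', hcy']
      exact ⟨by omega, by omega⟩
    have hTc1 := hTpos c
    have hTc2 := hTk c
    -- helper: row neighbour strictness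
    have hrow : 2 ≤ x → ht n P (x-1) ≤ y - 1 →
        y - 1 < ht n (cm n k C ξ) (x-1) := by
      intro hx2 hP1
      obtain ⟨c'', hc''11, hc''12, hcx2', hcy2'⟩ := cell_mk' n P (x-1) (y-1) i0
        (by omega) (by omega) (by omega) hP1
      have hadj1 : c.1.1 = c''.1.1 := by omega
      have hadj2 : c.1.2 + 1 = c''.1.2 := by omega
      have hlt := hstr.1 c c'' hadj1 hadj2
      have h1'' := hTpos c''
      have h2'' := hTk c''
      obtain ⟨hlo'', hhi''⟩ := hsand c''
      rw [hcx2', hcy2'] at hlo'' hhi''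
      have hmle := hmono (k - T c'' + 1) ξ (by omega) (x-1) (by omega)
      omega
    -- helper: column neighbour strictness
    have hcol : x + 1 ≤ n → ht n P (x+1) ≤ y - 1 →
        y - 1 < ht n (cm n k C ξ) (x+1) := by
      intro hxn1 hP1
      obtain ⟨c', hc'11, hc'12, hcx2', hcy2'⟩ := cell_mk' n P (x+1) (y-1) (i0+1)
        (by omega) hxn1 (by push_cast; omega) hP1
      have hadj1 : c.1.1 + 1 = c'.1.1 := by omega
      have hadj2 : c.1.2 = c'.1.2 := by omega
      have hlt := hstr.2 c c' hadj1 hadj2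
      have h1' := hTpos c'
      have h2' := hTk c'
      obtain ⟨hlo', hhi'⟩ := hsand c'
      rw [hcx2', hcy2'] at hlo' hhi'
      have hmle := hmono (k - T c' + 1) ξ (by omega) (x+1) (by omega)
      omega
    -- step bounds
    have hstepA : ht n (cm n k C ξ) x ≤ ht n (cm n k C ξ) (x-1) + 1 ∧
        ht n (cm n k C ξ) (x-1) - 1 ≤ ht n (cm n k C ξ) x := by
      have hs := ht_succ' n (cm n k C ξ) (x-1)
      rw [Nat.sub_add_cancel hx1] at hs
      split at hs <;> omega
    have hstepA2 : ht n (cm n k C ξ) (x+1) ≤ ht n (cm n k C ξ) x + 1 ∧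
        ht n (cm n k C ξ) x - 1 ≤ ht n (cm n k C ξ) (x+1) := by
      have hs := ht_succ' n (cm n k C ξ) x
      split at hs <;> omega
    have hstepP : ht n P (x+1) ≤ ht n P x + 1 ∧ ht n P x - 1 ≤ ht n P (x+1) := by
      have hs := ht_succ' n P x
      split at hs <;> omega
    have hstepP2 : ht n P x ≤ ht n P (x-1) + 1 ∧ ht n P (x-1) - 1 ≤ ht n P x := by
      have hs := ht_succ' n P (x-1)
      rw [Nat.sub_add_cancel hx1] at hs
      split at hs <;> omega
    have hpA1 := ht_emod n (cm n k C ξ) (x-1)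
    have hpA2 := ht_emod n (cm n k C ξ) (x+1)
    have hpP1 := ht_emod n P (x-1)
    have hpP2 := ht_emod n P (x+1)
    have hPlex := hPle ξ x hx
    have hPlex1 : x - 1 ≤ n → ht n P (x-1) ≤ ht n (cm n k C ξ) (x-1) :=
      fun h => hPle ξ (x-1) h
    have hPlex2 : x + 1 ≤ n → ht n P (x+1) ≤ ht n (cm n k C ξ) (x+1) :=
      fun h => hPle ξ (x+1) h
    -- Claim 1 : the height of C_ξ at x is exactly y
    have hclaim : ht n (cm n k C ξ) x = y := by
      by_contra hne
      have hAle2 : ht n (cm n k C ξ) x ≤ y - 2 := by omega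
      rcases Nat.lt_or_ge x n with hxn | hxn
      · by_cases hP1 : ht n P (x+1) ≤ y - 1
        · have := hcol (by omega) hP1
          omega
        · push_neg at hP1
          omega
      · have hxen : x = n := by omega
        have hx2 : 2 ≤ x := by
          by_contra h2x
          have hx1' : x = 1 := by omega
          have := ht_ge n (cm n k C ξ) x
          omega
        by_cases hP1 : ht n P (x-1) ≤ y - 1
        · have := hrow hx2 hP1
          omega
        · push_neg at hP1
          omega
    -- Claim 2 : x is a valley of C_ξ
    have hdown : stp n (cm n k C ξ) x = false := by
      have hprev : ht n (cm n k C ξ) (x-1) = y + 1 := by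
        by_cases hP1 : ht n P (x-1) ≤ y - 1
        · have hx2 : 2 ≤ x := by
            by_contra h2x
            have hx1' : x = 1 := by omega
            rw [hx1'] at hP1
            rw [show (1:ℕ) - 1 = 0 from rfl, ht_zero'] at hP1
            omega
          have := hrow hx2 hP1
          omega
        · push_neg at hP1
          have := hPlex1 (by omega)
          omega
      have hs := ht_succ' n (cm n k C ξ) (x-1)
      rw [Nat.sub_add_cancel hx1] at hs
      cases hstp : stp n (cm n k C ξ) x
      · rfl
      · exfalso
        rw [hstp] at hs
        simp at hs
        omega
    have hnext : x = n ∨ stp n (cm n k C ξ) (x+1) = true := by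
      rcases Nat.lt_or_ge x n with hxn | hxn
      · right
        have hnx1 : ht n (cm n k C ξ) (x+1) = y + 1 := by
          by_cases hP1 : ht n P (x+1) ≤ y - 1
          · have := hcol (by omega) hP1
            omega
          · push_neg at hP1
            have := hPlex2 (by omega)
            omega
        have hs := ht_succ' n (cm n k C ξ) x
        cases hstp : stp n (cm n k C ξ) (x+1)
        · exfalso
          rw [hstp] at hs
          simp at hs
          omega
        · rfl
      · left; omega
    exact Or.inr ⟨by omega, hx1, hx, hdown, hnext⟩
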